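/- arXiv:2103.10622 — 6 statements merged into one kernel-verified Lean document; each statement's English description precedes it below -/
import Mathlib

section
/- For integers m ≥ 2, twice the Euler sum of harmonic numbers satisfies: 2·∑_{n=1}^∞ H_n/n^m = (m+2)·ζ(m+1) − ∑_{n=1}^{m−2} ζ(m−n)·ζ(n+1). -/
/-- The `n`-th harmonicR number `H_n = ∑_{j=1}^n 1/j`, as a real number. -/
noncomputable def harmonicR (n : ℕ) : ℝ := ∑ j ∈ Finset.Icc 1 n, (1 : ℝ) / j

/-- `ζ(s) = ∑_{n=1}^∞ 1/n^s`. -/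
noncomputable def zetaR (s : ℕ) : ℝ := ∑' n : ℕ, (1 : ℝ) / (n + 1) ^ s

open Filter Finset Topology

lemma inv_nat_tendsto (c : ℝ) : Tendsto (fun j : ℕ => ((j : ℝ) + c)⁻¹) atTop (𝓝 0) := by
  apply Tendsto.inv_tendsto_atTop
  exact tendsto_atTop_add_const_right _ c tendsto_natCast_atTop_atTop

/-- Telescoping sum for an antitone sequence tending to zero. -/

lemma telescope_hasSum (g : ℕ → ℝ) (hg : Antitone g) (h0 : Tendsto g atTop (𝓝 0)) :
    HasSum (fun n => g n - g (n + 1)) (g 0) := by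
  have hnn : ∀ n, 0 ≤ g n - g (n + 1) := fun n => sub_nonneg.2 (hg (Nat.le_succ n))
  rw [hasSum_iff_tendsto_nat_of_nonneg hnn]
  have : (fun n => ∑ i ∈ range n, (g i - g (i + 1))) = fun n => g 0 - g n := by
    funext n; exact Finset.sum_range_sub' g n
  rw [this]
  simpa using (tendsto_const_nhds.sub h0)

/-- `∑_{j≥0} 1/((K+j+1)(K+j+2)) = 1/(K+1)`. -/

lemma hasSum_tele1 (K : ℕ) :
    HasSum (fun j : ℕ => (((K : ℝ) + j + 1) * ((K : ℝ) + j + 2))⁻¹) ((K + 1 : ℝ))⁻¹ := by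
  have h := telescope_hasSum (fun j => ((K : ℝ) + j + 1)⁻¹) ?_ ?_
  · convert h using 2 with j
    · have h1 : (0:ℝ) < ((K : ℝ) + j + 1) := by positivity
      have h2 : (0:ℝ) < ((K : ℝ) + (j+1:ℕ) + 1) := by positivity
      rw [inv_sub_inv (ne_of_gt h1) (ne_of_gt h2)]
      rw [div_eq_mul_inv, show ((K:ℝ) + ((j+1:ℕ):ℝ) + 1) - ((K:ℝ) + j + 1) = 1 by push_cast; ring,
        one_mul, show ((K:ℝ) + ((j+1:ℕ):ℝ) + 1) = (K:ℝ) + j + 2 by push_cast; ring]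
    · norm_num
  · intro a b hab
    have h1 : (0:ℝ) < (K : ℝ) + a + 1 := by positivity
    have h2 : ((K:ℝ) + a + 1) ≤ ((K:ℝ) + b + 1) := by
      have : (a:ℝ) ≤ b := by exact_mod_cast hab
      linarith
    exact inv_anti₀ h1 h2
  · have := inv_nat_tendsto ((K : ℝ) + 1)
    apply this.congr
    intro j; ring_nf

/-- `∑_{j≥0} (1/(j+1) - 1/(j+1+K)) = H_K`. -/

lemma hasSum_tele2 (K : ℕ) :
    HasSum (fun j : ℕ => ((j : ℝ) + 1)⁻¹ - ((j : ℝ) + 1 + K)⁻¹) (harmonicR K) := by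
  have key : ∀ t : ℕ, HasSum (fun j : ℕ => ((j:ℝ) + t + 1)⁻¹ - ((j:ℝ) + (t+1:ℕ) + 1)⁻¹)
      (((t:ℝ) + 1)⁻¹) := by
    intro t
    have h := telescope_hasSum (fun j => ((j : ℝ) + t + 1)⁻¹) ?_ ?_
    · convert h using 2 with j
      · push_cast; ring_nf
      · norm_num
    · intro a b hab
      have h1 : (0:ℝ) < (a : ℝ) + t + 1 := by positivity
      apply inv_anti₀ h1
      have : (a:ℝ) ≤ b := by exact_mod_cast hab
      linarith
    · have := inv_nat_tendsto ((t : ℝ) + 1)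
      apply this.congr
      intro j; ring_nf
  have h := hasSum_sum (s := range K) (f := fun (t j : ℕ) => ((j:ℝ) + (t:ℝ) + 1)⁻¹ - ((j:ℝ) + ((t+1:ℕ):ℝ) + 1)⁻¹)
    (a := fun t : ℕ => ((t:ℝ)+1)⁻¹) (fun t _ => key t)
  have e1 : (fun j : ℕ => ∑ t ∈ range K, (((j:ℝ) + t + 1)⁻¹ - ((j:ℝ) + (t+1:ℕ) + 1)⁻¹))
      = fun j : ℕ => ((j : ℝ) + 1)⁻¹ - ((j : ℝ) + 1 + K)⁻¹ := by
    funext j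
    have := Finset.sum_range_sub' (f := fun t : ℕ => ((j:ℝ) + t + 1)⁻¹) K
    rw [this]
    norm_num; ring_nf
  have e2 : ∑ t ∈ range K, ((t:ℝ)+1)⁻¹ = harmonicR K := by
    rw [harmonicR, show Finset.Icc 1 K = Finset.Ico 1 (K+1) by rfl, Finset.sum_Ico_eq_sum_range]
    simp only [Nat.add_sub_cancel, one_div]
    apply Finset.sum_congr rfl
    intro t _
    push_cast
    ring_nf
  rw [e1, e2] at h
  exact h

/-- summand of the double zeta value, unconstrained coordinates: `I = p.1+1`, `N = p.1+p.2+2`. -/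

noncomputable def Zt (a b : ℕ) (p : ℕ × ℕ) : ℝ :=
    (((p.1:ℝ) + (p.2:ℝ) + 2) ^ a * ((p.1:ℝ) + 1) ^ b)⁻¹

/-- summand of the double zeta value, constrained coordinates: `N = p.1+1 > I = p.2+1`. -/

noncomputable def Zt' (a b : ℕ) (p : ℕ × ℕ) : ℝ :=
    if p.2 < p.1 then (((p.1:ℝ) + 1) ^ a * ((p.2:ℝ) + 1) ^ b)⁻¹ else 0

/-- the double zeta value `ζ(a,b) = ∑_{N>I≥1} 1/(N^a I^b)`. -/

noncomputable def Zv (a b : ℕ) : ℝ := ∑' p : ℕ × ℕ, Zt' a b p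

lemma summable_zeta (s : ℕ) (hs : 2 ≤ s) : Summable (fun n : ℕ => (((n:ℝ) + 1) ^ s)⁻¹) := by
  have := (summable_nat_add_iff (f := fun n : ℕ => 1 / (n:ℝ) ^ s) 1).2
    (Real.summable_one_div_nat_pow.2 hs)
  apply this.congr
  intro n; push_cast; rw [one_div]

lemma bound_j (a i : ℕ) (ha : 2 ≤ a) :
    Summable (fun j : ℕ => (((i:ℝ) + j + 2) ^ a)⁻¹) ∧
      ∑' j : ℕ, (((i:ℝ) + j + 2) ^ a)⁻¹ ≤ (((i:ℝ) + 1) ^ (a - 1))⁻¹ := by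
  have hg : HasSum (fun j : ℕ => (((i:ℝ)+1)^(a-2))⁻¹ * (((i:ℝ) + j + 1) * ((i:ℝ) + j + 2))⁻¹)
      ((((i:ℝ)+1)^(a-2))⁻¹ * ((i:ℝ) + 1)⁻¹) := by
    exact (hasSum_tele1 i).mul_left ((((i:ℝ)+1)^(a-2))⁻¹)
  have hle : ∀ j : ℕ, (((i:ℝ) + j + 2) ^ a)⁻¹
      ≤ (((i:ℝ)+1)^(a-2))⁻¹ * (((i:ℝ) + j + 1) * ((i:ℝ) + j + 2))⁻¹ := by
    intro j
    rw [← mul_inv]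
    apply inv_anti₀ (by positivity)
    calc ((i:ℝ)+1)^(a-2) * (((i:ℝ) + j + 1) * ((i:ℝ) + j + 2))
        ≤ ((i:ℝ)+j+2)^(a-2) * (((i:ℝ) + j + 2) * ((i:ℝ) + j + 2)) := by
          gcongr <;> [skip; linarith; skip] <;> linarith
      _ = ((i:ℝ)+j+2)^(a-2+2) := by rw [pow_add]; ring
      _ = ((i:ℝ)+j+2)^a := by rw [Nat.sub_add_cancel ha]
  have hnn : ∀ j : ℕ, (0:ℝ) ≤ (((i:ℝ) + j + 2) ^ a)⁻¹ := fun j => by positivity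
  have hsum : Summable (fun j : ℕ => (((i:ℝ) + j + 2) ^ a)⁻¹) :=
    Summable.of_nonneg_of_le hnn hle hg.summable
  refine ⟨hsum, ?_⟩
  calc ∑' j : ℕ, (((i:ℝ) + j + 2) ^ a)⁻¹
      ≤ ∑' j : ℕ, (((i:ℝ)+1)^(a-2))⁻¹ * (((i:ℝ) + j + 1) * ((i:ℝ) + j + 2))⁻¹ :=
        Summable.tsum_le_tsum hle hsum hg.summable
    _ = (((i:ℝ)+1)^(a-2))⁻¹ * ((i:ℝ) + 1)⁻¹ := hg.tsum_eq
    _ = (((i:ℝ) + 1) ^ (a - 1))⁻¹ := by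
        rw [← mul_inv, ← pow_succ]
        congr 2
        omega

lemma Zt_nonneg (a b : ℕ) (p : ℕ × ℕ) : 0 ≤ Zt a b p := by unfold Zt; positivity

lemma Zt'_nonneg (a b : ℕ) (p : ℕ × ℕ) : 0 ≤ Zt' a b p := by
  unfold Zt'; split <;> positivity

lemma Zt_fiber (a b i : ℕ) :
    (fun j => Zt a b (i, j)) = fun j : ℕ => (((i:ℝ)+1)^b)⁻¹ * (((i:ℝ) + j + 2) ^ a)⁻¹ := by
  funext j; unfold Zt; rw [← mul_inv, mul_comm]

lemma summable_Zt (a b : ℕ) (ha : 2 ≤ a) (hab : 3 ≤ a + b) : Summable (Zt a b) := by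
  rw [summable_prod_of_nonneg (fun p => Zt_nonneg a b p)]
  constructor
  · intro i
    rw [Zt_fiber]
    exact ((bound_j a i ha).1.mul_left _)
  · refine Summable.of_nonneg_of_le (fun i => tsum_nonneg fun j => Zt_nonneg a b (i, j))
      ?_ (summable_zeta 2 le_rfl)
    intro i
    calc ∑' j, Zt a b (i, j)
        = (((i:ℝ)+1)^b)⁻¹ * ∑' j : ℕ, (((i:ℝ) + j + 2) ^ a)⁻¹ := by
          rw [Zt_fiber, tsum_mul_left]
      _ ≤ (((i:ℝ)+1)^b)⁻¹ * (((i:ℝ) + 1) ^ (a - 1))⁻¹ := by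
          have hb := (bound_j a i ha).2
          have : (0:ℝ) ≤ (((i:ℝ)+1)^b)⁻¹ := by positivity
          exact mul_le_mul_of_nonneg_left hb this
      _ = (((i:ℝ)+1) ^ (b + (a-1)))⁻¹ := by rw [← mul_inv, ← pow_add]
      _ ≤ (((i:ℝ) + 1) ^ 2)⁻¹ := by
          apply inv_anti₀ (by positivity)
          apply pow_le_pow_right₀ (by linarith [Nat.cast_nonneg (α := ℝ) i])
          omega

lemma reindexZ (a b : ℕ) :
    (Summable (Zt' a b) ↔ Summable (Zt a b)) ∧ ∑' p, Zt' a b p = ∑' p, Zt a b p := by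
  have hinj : Function.Injective (fun q : ℕ × ℕ => (q.1 + q.2 + 1, q.1)) := by
    intro q q' h
    simp only [Prod.mk.injEq] at h
    obtain ⟨h1, h2⟩ := h
    exact Prod.ext h2 (by omega)
  have hsupp : Function.support (Zt' a b) ⊆ Set.range (fun q : ℕ × ℕ => (q.1 + q.2 + 1, q.1)) := by
    intro p hp
    have : p.2 < p.1 := by
      by_contra h
      exact hp (by unfold Zt'; rw [if_neg h])
    exact ⟨(p.2, p.1 - p.2 - 1), by ext <;> simp <;> omega⟩
  have hcomp : (Zt' a b) ∘ (fun q : ℕ × ℕ => (q.1 + q.2 + 1, q.1)) = Zt a b := by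
    funext q
    unfold Zt' Zt
    simp only [Function.comp_apply]
    rw [if_pos (by omega)]
    push_cast
    ring_nf
  have hzero : ∀ p ∉ Set.range (fun q : ℕ × ℕ => (q.1 + q.2 + 1, q.1)), Zt' a b p = 0 := by
    intro p hp
    by_contra h
    exact hp (hsupp h)
  constructor
  · have := Function.Injective.summable_iff hinj hzero
    rw [hcomp] at this
    exact this.symm
  · have h2 := Function.Injective.tsum_eq hinj hsupp
    have h3 : ∑' c : ℕ × ℕ, Zt' a b (c.1 + c.2 + 1, c.1) = ∑' p, Zt a b p :=
      tsum_congr fun q => congrFun hcomp q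
    rw [← h2, ← h3]

lemma summable_Zt' (a b : ℕ) (ha : 2 ≤ a) (hab : 3 ≤ a + b) : Summable (Zt' a b) :=
  (reindexZ a b).1.2 (summable_Zt a b ha hab)

lemma marginal (a b n : ℕ) :
    ∑' i : ℕ, Zt' a b (n, i) = ∑ i ∈ range n, (((n:ℝ) + 1) ^ a * ((i:ℝ) + 1) ^ b)⁻¹ := by
  rw [tsum_eq_sum (s := range n) ?_]
  · apply Finset.sum_congr rfl
    intro i hi
    unfold Zt'
    rw [if_pos (mem_range.1 hi)]
  · intro i hi
    unfold Zt'
    rw [if_neg (by simpa using hi)]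

lemma harmonicR_range (n : ℕ) : harmonicR n = ∑ i ∈ range n, ((i:ℝ) + 1)⁻¹ := by
  rw [harmonicR, show Finset.Icc 1 n = Finset.Ico 1 (n+1) by rfl, Finset.sum_Ico_eq_sum_range]
  simp only [Nat.add_sub_cancel, one_div]
  apply Finset.sum_congr rfl
  intro t _
  push_cast
  ring_nf

lemma harmonicR_succ (n : ℕ) : harmonicR (n + 1) = harmonicR n + ((n:ℝ) + 1)⁻¹ := by
  rw [harmonicR_range, harmonicR_range, Finset.sum_range_succ]

lemma geo (m : ℕ) (hm : 2 ≤ m) (x y : ℝ) (hx : 0 < x) (hy : 0 < y) :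
    ∑ a ∈ Icc 2 m, (x ^ a * y ^ (m + 1 - a))⁻¹ * (x - y) = (x * y ^ (m-1))⁻¹ - (x ^ m)⁻¹ := by
  induction m, hm using Nat.le_induction with
  | base =>
    rw [show Icc 2 2 = {2} by rfl, Finset.sum_singleton]
    norm_num
    field_simp
  | succ m hm ih =>
    rw [Finset.sum_Icc_succ_top (by omega)]
    have e1 : ∀ a ∈ Icc 2 m, (x ^ a * y ^ (m + 1 + 1 - a))⁻¹ * (x - y)
        = y⁻¹ * ((x ^ a * y ^ (m + 1 - a))⁻¹ * (x - y)) := by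
      intro a ha
      rw [mem_Icc] at ha
      rw [show m + 1 + 1 - a = (m + 1 - a) + 1 by omega, pow_succ, mul_inv, mul_inv, mul_inv]
      ring
    rw [Finset.sum_congr rfl e1, ← Finset.mul_sum, ih]
    have hxm : x ^ (m+1) = x ^ m * x := pow_succ x m
    have hym : y ^ (m+1-1) = y ^ (m-1) * y := by
      rw [show m + 1 - 1 = (m-1) + 1 by omega, pow_succ]
    rw [show m + 1 + 1 - (m+1) = 1 by omega, hxm, hym, pow_one]
    have hA : (0:ℝ) < x ^ m := by positivity
    have hB : (0:ℝ) < y ^ (m-1) := by positivity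
    generalize x ^ m = A at *
    generalize y ^ (m-1) = B at *
    field_simp
    ring

lemma zetaR_eq (s : ℕ) : zetaR s = ∑' n : ℕ, (((n:ℝ) + 1) ^ s)⁻¹ := by
  unfold zetaR
  exact tsum_congr fun n => one_div _

lemma stuffle (a b : ℕ) (ha : 2 ≤ a) (hb : 2 ≤ b) :
    zetaR a * zetaR b = zetaR (a + b) + Zv a b + Zv b a := by
  set h : ℕ × ℕ → ℝ := fun p => (((p.1:ℝ) + 1) ^ a * ((p.2:ℝ) + 1) ^ b)⁻¹ with hh
  have hnn : ∀ p, 0 ≤ h p := fun p => by positivity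
  have hsummable : Summable h := by
    rw [summable_prod_of_nonneg hnn]
    constructor
    · intro i
      have : (fun j => h (i, j)) = fun j : ℕ => (((i:ℝ)+1)^a)⁻¹ * (((j:ℝ)+1)^b)⁻¹ := by
        funext j; simp only [hh, mul_inv]
      rw [this]
      exact (summable_zeta b hb).mul_left _
    · have : (fun i : ℕ => ∑' j, h (i, j))
          = fun i : ℕ => (((i:ℝ)+1)^a)⁻¹ * ∑' j : ℕ, (((j:ℝ)+1)^b)⁻¹ := by
        funext i
        rw [← tsum_mul_left]
        exact tsum_congr fun j => by simp only [hh, mul_inv]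
      rw [this]
      exact (summable_zeta a ha).mul_right _
  have hprod : zetaR a * zetaR b = ∑' p : ℕ × ℕ, h p := by
    rw [Summable.tsum_prod' hsummable (fun i => (hsummable.prod_factor i))]
    rw [zetaR_eq, zetaR_eq, ← tsum_mul_right]
    apply tsum_congr
    intro i
    rw [← tsum_mul_left]
    exact tsum_congr fun j => by simp only [hh, mul_inv]
  -- split into diagonal, lower (p.2 < p.1), upper (p.1 < p.2)
  set d : ℕ × ℕ → ℝ := fun p => if p.1 = p.2 then h p else 0 with hd
  set u : ℕ × ℕ → ℝ := fun p => if p.1 < p.2 then h p else 0 with hu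
  have hsplit : h = fun p => d p + (Zt' a b p + u p) := by
    funext p
    simp only [hd, hu, Zt']
    rcases lt_trichotomy p.1 p.2 with hlt | heq | hgt
    · rw [if_neg (show ¬ p.1 = p.2 by omega), if_neg (show ¬ p.2 < p.1 by omega), if_pos hlt]
      ring
    · rw [if_pos heq, if_neg (show ¬ p.2 < p.1 by omega), if_neg (show ¬ p.1 < p.2 by omega)]
      ring
    · rw [if_neg (show ¬ p.1 = p.2 by omega), if_pos hgt, if_neg (show ¬ p.1 < p.2 by omega)]
      simp only [hh]
      ring
  have dnn : ∀ p, 0 ≤ d p := fun p => by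
    simp only [hd]; split; exacts [hnn p, le_refl 0]
  have dle : ∀ p, d p ≤ h p := fun p => by
    simp only [hd]; split; exacts [le_refl _, hnn p]
  have unn : ∀ p, 0 ≤ u p := fun p => by
    simp only [hu]; split; exacts [hnn p, le_refl 0]
  have ule : ∀ p, u p ≤ h p := fun p => by
    simp only [hu]; split; exacts [le_refl _, hnn p]
  have znn : ∀ p, 0 ≤ Zt' a b p := Zt'_nonneg a b
  have zle : ∀ p, Zt' a b p ≤ h p := fun p => by
    simp only [Zt', hh]; split; exacts [le_refl _, hnn p]
  have hsd : Summable d := Summable.of_nonneg_of_le dnn dle hsummable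
  have hsu : Summable u := Summable.of_nonneg_of_le unn ule hsummable
  have hsz : Summable (Zt' a b) := Summable.of_nonneg_of_le znn zle hsummable
  have hadd : ∑' p, h p = ∑' p, d p + (∑' p, Zt' a b p + ∑' p, u p) := by
    rw [← Summable.tsum_add hsz hsu, ← Summable.tsum_add hsd (hsz.add hsu)]
    exact tsum_congr fun p => congrFun hsplit p
  -- diagonal
  have hdiag : ∑' p, d p = zetaR (a + b) := by
    have hinj : Function.Injective (fun n : ℕ => (n, n)) := fun n n' e => (Prod.mk.injEq _ _ _ _ ▸ e : _ ∧ _).1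
    have hsupp : Function.support d ⊆ Set.range (fun n : ℕ => (n, n)) := by
      intro p hp
      have : p.1 = p.2 := by
        by_contra hne
        exact hp (by simp only [hd]; rw [if_neg hne])
      exact ⟨p.1, by ext <;> simp [this]⟩
    have := Function.Injective.tsum_eq hinj hsupp (f := d)
    rw [← this, zetaR_eq]
    apply tsum_congr
    intro n
    simp only [hd, hh, if_pos rfl]
    rw [← pow_add]
  -- upper triangle
  have hupper : ∑' p, u p = Zv b a := by
    have := (Equiv.prodComm ℕ ℕ).tsum_eq u
    rw [← this]
    unfold Zv
    apply tsum_congr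
    intro p
    simp only [hu, Equiv.prodComm_apply, Prod.swap_prod_mk, Zt', hh, Prod.fst_swap, Prod.snd_swap]
    rcases lt_or_ge p.2 p.1 with hlt | hge
    · rw [if_pos hlt, if_pos hlt, mul_comm]
    · rw [if_neg (by omega), if_neg (by omega)]
  rw [hprod, hadd, hdiag, hupper]
  show zetaR (a+b) + (Zv a b + Zv b a) = _
  ring

lemma marginal' (a b n : ℕ) :
    ∑' i : ℕ, Zt' a 1 (n, i) = harmonicR n * (((n:ℝ) + 1) ^ a)⁻¹ := by
  rw [marginal, harmonicR_range, Finset.sum_mul]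
  apply Finset.sum_congr rfl
  intro i _
  rw [pow_one, mul_inv, mul_comm]

lemma stepA (m : ℕ) (hm : 2 ≤ m) :
    Summable (fun n : ℕ => harmonicR (n + 1) / ((n:ℝ) + 1) ^ m) ∧
      ∑' n : ℕ, harmonicR (n + 1) / ((n:ℝ) + 1) ^ m = zetaR (m + 1) + Zv m 1 := by
  have hZ : Summable (Zt' m 1) := summable_Zt' m 1 hm (by omega)
  have hfib : ∀ n : ℕ, Summable (fun i => Zt' m 1 (n, i)) := fun n => hZ.prod_factor n
  have hmarg : Summable (fun n : ℕ => harmonicR n * (((n:ℝ) + 1) ^ m)⁻¹) := by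
    have := ((summable_prod_of_nonneg (fun p => Zt'_nonneg m 1 p)).1 hZ).2
    apply this.congr
    intro n
    exact marginal' m 1 n
  have hdecomp : (fun n : ℕ => harmonicR (n + 1) / ((n:ℝ) + 1) ^ m)
      = fun n : ℕ => harmonicR n * (((n:ℝ) + 1) ^ m)⁻¹ + (((n:ℝ) + 1) ^ (m+1))⁻¹ := by
    funext n
    rw [harmonicR_succ, div_eq_mul_inv, add_mul, pow_succ, mul_inv]
    ring
  have hzsum := summable_zeta (m + 1) (by omega)
  constructor
  · rw [hdecomp]; exact hmarg.add hzsum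
  · rw [hdecomp, Summable.tsum_add hmarg hzsum]
    have h1 : ∑' n : ℕ, harmonicR n * (((n:ℝ) + 1) ^ m)⁻¹ = Zv m 1 := by
      unfold Zv
      rw [Summable.tsum_prod' hZ hfib]
      exact (tsum_congr fun n => marginal' m 1 n).symm
    rw [h1, zetaR_eq]
    ring

lemma sumformula (m : ℕ) (hm : 2 ≤ m) :
    ∑ a ∈ Icc 2 m, Zv a (m + 1 - a) = zetaR (m + 1) := by
  classical
  set D' : ℕ × ℕ → ℝ := fun p => if p.2 < p.1 then
      ((((p.1:ℝ) + 1) * ((p.2:ℝ) + 1) ^ (m-1))⁻¹ - (((p.1:ℝ) + 1) ^ m)⁻¹) * ((p.1:ℝ) - (p.2:ℝ))⁻¹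
    else 0 with hD'
  set D1 : ℕ × ℕ → ℝ := fun q => (((q.1:ℝ) + (q.2:ℝ) + 2) * ((q.1:ℝ) + 1) ^ (m-1) * ((q.2:ℝ) + 1))⁻¹ with hD1
  set D2 : ℕ × ℕ → ℝ := fun q => ((((q.1:ℝ) + (q.2:ℝ) + 2)) ^ m * ((q.2:ℝ) + 1))⁻¹ with hD2
  have hZa : ∀ a ∈ Icc 2 m, Summable (Zt' a (m + 1 - a)) := by
    intro a ha
    rw [mem_Icc] at ha
    exact summable_Zt' a (m+1-a) ha.1 (by omega)
  -- step 2: swap finite sum and tsum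
  have step2 : ∑ a ∈ Icc 2 m, Zv a (m + 1 - a) = ∑' p : ℕ × ℕ, ∑ a ∈ Icc 2 m, Zt' a (m+1-a) p := by
    unfold Zv
    exact (Summable.tsum_finsetSum fun a ha => hZa a ha).symm
  -- step 3: pointwise geometric evaluation
  have step3 : ∀ p : ℕ × ℕ, ∑ a ∈ Icc 2 m, Zt' a (m+1-a) p = D' p := by
    intro p
    by_cases h : p.2 < p.1
    · simp only [hD', if_pos h]
      set x : ℝ := (p.1:ℝ) + 1 with hx
      set y : ℝ := (p.2:ℝ) + 1 with hy
      have hxy : x - y ≠ 0 := by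
        have : (p.2:ℝ) < (p.1:ℝ) := by exact_mod_cast h
        simp only [hx, hy]; intro hc; nlinarith
      rw [show ((p.1:ℝ) - (p.2:ℝ)) = x - y by simp only [hx, hy]; ring]
      rw [eq_mul_inv_iff_mul_eq₀ hxy, Finset.sum_mul]
      rw [← geo m hm x y (by positivity) (by positivity)]
      apply Finset.sum_congr rfl
      intro a _
      rw [Zt', if_pos h]
    · simp only [hD', if_neg h]
      apply Finset.sum_eq_zero
      intro a _
      rw [Zt', if_neg h]
  -- step 4: reindex to unconstrained coordinates
  have step4 : ∑' p : ℕ × ℕ, D' p = ∑' q : ℕ × ℕ, (D1 q - D2 q) := by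
    have hinj : Function.Injective (fun q : ℕ × ℕ => (q.1 + q.2 + 1, q.1)) := by
      intro q q' hq
      simp only [Prod.mk.injEq] at hq
      exact Prod.ext hq.2 (by omega)
    have hsupp : Function.support D' ⊆ Set.range (fun q : ℕ × ℕ => (q.1 + q.2 + 1, q.1)) := by
      intro p hp
      have : p.2 < p.1 := by
        by_contra hc
        exact hp (by simp only [hD']; rw [if_neg hc])
      exact ⟨(p.2, p.1 - p.2 - 1), by ext <;> simp <;> omega⟩
    have := Function.Injective.tsum_eq hinj hsupp (f := D')
    rw [← this]
    apply tsum_congr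
    intro q
    simp only [hD', hD1, hD2]
    rw [if_pos (show q.1 < q.1 + q.2 + 1 by omega)]
    push_cast
    have h1 : ((q.1:ℝ) + (q.2:ℝ) + 1 + 1) = (q.1:ℝ) + (q.2:ℝ) + 2 := by ring
    have h2 : ((q.1:ℝ) + (q.2:ℝ) + 1 - q.1) = (q.2:ℝ) + 1 := by ring
    rw [h1, h2, sub_mul]
    simp only [mul_inv]
    try ring
  -- step 5: D2 sums to Zv m 1
  have hsZt : Summable (Zt m 1) := summable_Zt m 1 hm (by omega)
  have hD2eq : D2 = (Zt m 1) ∘ (Equiv.prodComm ℕ ℕ) := by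
    funext q
    simp only [hD2, Zt, Function.comp_apply, Equiv.prodComm_apply, Prod.fst_swap, Prod.snd_swap]
    rw [pow_one]
    ring_nf
  have hsD2 : Summable D2 := by
    rw [hD2eq]
    exact ((Equiv.prodComm ℕ ℕ).summable_iff).2 hsZt
  have htD2 : ∑' q, D2 q = Zv m 1 := by
    rw [hD2eq]
    have := (Equiv.prodComm ℕ ℕ).tsum_eq (Zt m 1)
    rw [show ∑' q, ((Zt m 1) ∘ (Equiv.prodComm ℕ ℕ)) q = ∑' q, Zt m 1 ((Equiv.prodComm ℕ ℕ) q) from rfl, this]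
    exact (reindexZ m 1).2.symm
  -- step 6: D1 sums to ζ(m+1) + Zv m 1
  have hfib : ∀ i : ℕ, HasSum (fun j => D1 (i, j)) (harmonicR (i+1) / ((i:ℝ) + 1) ^ m) := by
    intro i
    have ht := (hasSum_tele2 (i+1)).mul_left ((((i:ℝ)+1) ^ (m-1))⁻¹ * (((i:ℝ)+1))⁻¹)
    have heq : (fun j : ℕ => (((i:ℝ)+1) ^ (m-1))⁻¹ * (((i:ℝ)+1))⁻¹ *
        (((j:ℝ) + 1)⁻¹ - ((j:ℝ) + 1 + ((i+1:ℕ):ℝ))⁻¹)) = fun j => D1 (i, j) := by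
      funext j
      simp only [hD1]
      have hj1 : (0:ℝ) < (j:ℝ) + 1 := by positivity
      have hij : (0:ℝ) < (j:ℝ) + 1 + ((i+1:ℕ):ℝ) := by positivity
      rw [inv_sub_inv (ne_of_gt hj1) (ne_of_gt hij)]
      push_cast
      rw [show ((j:ℝ) + 1 + ((i:ℝ) + 1)) - ((j:ℝ)+1) = (i:ℝ) + 1 by ring]
      rw [div_eq_mul_inv, mul_inv, mul_inv, mul_inv]
      have hi1 : ((i:ℝ) + 1) ≠ 0 := by positivity
      field_simp
      ring_nf
    rw [heq] at ht
    suffices hs : harmonicR (i+1) / ((i:ℝ)+1)^m = (((i:ℝ)+1)^(m-1))⁻¹ * ((i:ℝ)+1)⁻¹ * harmonicR (i+1) by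
      rw [hs]; exact ht
    rw [div_eq_mul_inv]
    have : (((i:ℝ)+1) ^ (m-1))⁻¹ * (((i:ℝ)+1))⁻¹ = (((i:ℝ)+1) ^ m)⁻¹ := by
      rw [← mul_inv, ← pow_succ]
      congr 2
      omega
    rw [← this]
    ring
  have hD1nn : ∀ q, 0 ≤ D1 q := fun q => by simp only [hD1]; positivity
  have hsD1 : Summable D1 := by
    rw [summable_prod_of_nonneg hD1nn]
    exact ⟨fun i => (hfib i).summable, by
      apply ((stepA m hm).1).congr
      intro i
      exact ((hfib i).tsum_eq).symm⟩
  have htD1 : ∑' q, D1 q = zetaR (m + 1) + Zv m 1 := by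
    rw [Summable.tsum_prod' hsD1 (fun i => (hfib i).summable)]
    rw [← (stepA m hm).2]
    exact tsum_congr fun i => (hfib i).tsum_eq
  -- assemble
  rw [step2, tsum_congr step3, step4, Summable.tsum_sub hsD1 hsD2, htD1, htD2]
  ring

theorem euler_sum_harmonicR (m : ℕ) (hm : 2 ≤ m) :
    2 * ∑' n : ℕ, harmonicR (n + 1) / (n + 1 : ℝ) ^ m =
      (m + 2) * zetaR (m + 1) -
        ∑ n ∈ Finset.Icc 1 (m - 2), zetaR (m - n) * zetaR (n + 1) := by
  have hL : ∑' n : ℕ, harmonicR (n + 1) / ((n:ℝ) + 1) ^ m = zetaR (m+1) + Zv m 1 :=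
    (stepA m hm).2
  have hterm : ∀ n ∈ Icc 1 (m - 2), zetaR (m - n) * zetaR (n + 1)
      = zetaR (m + 1) + Zv (m - n) (n + 1) + Zv (n + 1) (m - n) := by
    intro n hn
    rw [mem_Icc] at hn
    have h := stuffle (m - n) (n + 1) (by omega) (by omega)
    rwa [show m - n + (n + 1) = m + 1 by omega] at h
  have hsplit : ∑ n ∈ Icc 1 (m-2), zetaR (m - n) * zetaR (n + 1)
      = (m - 2 : ℕ) * zetaR (m + 1)
        + ∑ n ∈ Icc 1 (m-2), Zv (m - n) (n + 1)
        + ∑ n ∈ Icc 1 (m-2), Zv (n + 1) (m - n) := by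
    rw [Finset.sum_congr rfl hterm, Finset.sum_add_distrib, Finset.sum_add_distrib,
      Finset.sum_const, Nat.card_Icc, nsmul_eq_mul]
    norm_num
  have hA : ∑ n ∈ Icc 1 (m-2), Zv (m - n) (n + 1) = ∑ a ∈ Icc 2 (m-1), Zv a (m + 1 - a) := by
    apply Finset.sum_nbij' (i := fun n => m - n) (j := fun a => m - a)
    · intro n hn; rw [mem_Icc] at hn ⊢; omega
    · intro a ha; rw [mem_Icc] at ha ⊢; omega
    · intro n hn; rw [mem_Icc] at hn; omega
    · intro a ha; rw [mem_Icc] at ha; omega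
    · intro n hn
      rw [mem_Icc] at hn
      congr 1
      omega
  have hB : ∑ n ∈ Icc 1 (m-2), Zv (n + 1) (m - n) = ∑ a ∈ Icc 2 (m-1), Zv a (m + 1 - a) := by
    apply Finset.sum_nbij' (i := fun n => n + 1) (j := fun a => a - 1)
    · intro n hn; rw [mem_Icc] at hn ⊢; omega
    · intro a ha; rw [mem_Icc] at ha ⊢; omega
    · intro n hn; rw [mem_Icc] at hn; omega
    · intro a ha; rw [mem_Icc] at ha; omega
    · intro n hn
      rw [mem_Icc] at hn
      congr 1
      omega
  have hC : ∑ a ∈ Icc 2 (m-1), Zv a (m + 1 - a) = zetaR (m + 1) - Zv m 1 := by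
    have h := sumformula m hm
    rw [show m = (m - 1) + 1 by omega, Finset.sum_Icc_succ_top (by omega)] at h
    rw [show (m-1) + 1 = m by omega] at h
    rw [show m + 1 - m = 1 by omega] at h
    linarith
  have hcast : ((m - 2 : ℕ) : ℝ) = (m : ℝ) - 2 := by
    have : (2:ℕ) ≤ m := hm
    push_cast [Nat.cast_sub this]
    ring
  rw [hL, hsplit, hA, hB, hC, hcast]
  ring
end

section
/- The coefficients B(r,t,m) of T(r,n,t) = ∑_{m=0}^{r−1} B(r,t,m)·n^m satisfy B(r+1,t,0) = −∑_{j=0}^{r−1} (t−1)^{1+j} · ∑_{m=j}^{r−1} (B(r,t,m)/(m+1))·C(m+1, m−j)·B_{m−j}^+. -/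
/-- The nested sum `T(r,n,t)`: `T(1,n,t) = 1`, `T(r+1,n,t) = ∑_{k=t}^n T(r,k,t)`.
    (`Tsum 0` is an unused dummy value.) -/
def Tsum : ℕ → ℕ → ℕ → ℚ
  | 0, _, _ => 0
  | 1, _, _ => 1
  | r + 2, n, t => ∑ k ∈ Finset.Icc t n, Tsum (r + 1) k t

lemma Tsum_succ (r n t : ℕ) (hr : 1 ≤ r) :
    Tsum (r + 1) n t = ∑ k ∈ Finset.Icc t n, Tsum r k t := by
  obtain ⟨s, rfl⟩ : ∃ s, r = s + 1 := ⟨r - 1, by omega⟩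
  rfl

theorem B_recurrence_zero (B : ℕ → ℕ → ℕ → ℚ)
    (hB : ∀ r, 1 ≤ r → ∀ t n : ℕ, 1 ≤ t → t ≤ n →
      Tsum r n t = ∑ m ∈ Finset.range r, B r t m * (n : ℚ) ^ m)
    (r : ℕ) (hr : 1 ≤ r) (t : ℕ) (ht : 1 ≤ t) :
    B (r + 1) t 0 =
      -∑ j ∈ Finset.range r, ((t : ℚ) - 1) ^ (1 + j) *
        ∑ m ∈ Finset.Icc j (r - 1),
          B r t m / (m + 1) * (Nat.choose (m + 1) (m - j) : ℚ) * bernoulli' (m - j) := by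
  classical
  -- key identity: B(r+1,t,0) = -∑ B(r,t,m)·(∑_{k=1}^{t-1} k^m)
  have key : B (r + 1) t 0 =
      -∑ m ∈ Finset.range r, B r t m * ∑ k ∈ Finset.Ico 1 t, (k : ℚ) ^ m := by
    set Cst : ℚ := ∑ m ∈ Finset.range r, B r t m * ∑ k ∈ Finset.range t, (k : ℚ) ^ m
      with hCst
    set p : Polynomial ℚ :=
      ∑ m ∈ Finset.range (r + 1), Polynomial.C (B (r + 1) t m) * Polynomial.X ^ m with hp
    set q : Polynomial ℚ :=
      (∑ m ∈ Finset.range r, Polynomial.C (B r t m) *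
        ∑ i ∈ Finset.range (m + 1),
          Polynomial.C (bernoulli i * ((m + 1).choose i) / (m + 1)) *
            (Polynomial.X + 1) ^ (m + 1 - i)) - Polynomial.C Cst with hq
    have hevp : ∀ x : ℚ, p.eval x =
        ∑ m ∈ Finset.range (r + 1), B (r + 1) t m * x ^ m := by
      intro x
      simp [hp, Polynomial.eval_finset_sum]
    have hevq : ∀ x : ℚ, q.eval x =
        (∑ m ∈ Finset.range r, B r t m *
          ∑ i ∈ Finset.range (m + 1),
            bernoulli i * ((m + 1).choose i) / (m + 1) * (x + 1) ^ (m + 1 - i)) - Cst := by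
      intro x
      simp [hq, Polynomial.eval_finset_sum]
    have hinner : ∀ n m : ℕ,
        (∑ i ∈ Finset.range (m + 1),
          bernoulli i * ((m + 1).choose i) / (m + 1) * ((n : ℚ) + 1) ^ (m + 1 - i))
          = ∑ k ∈ Finset.range (n + 1), (k : ℚ) ^ m := by
      intro n m
      have hF := sum_range_pow (n + 1) m
      push_cast at hF
      rw [hF]
      refine Finset.sum_congr rfl fun i _ => by ring
    have hpq : p = q := by
      apply Polynomial.eq_of_infinite_eval_eq
      have hsub : (Nat.cast : ℕ → ℚ) '' Set.Ici t ⊆ {x | p.eval x = q.eval x} := by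
        rintro x ⟨n, hn, rfl⟩
        have htn : t ≤ n := hn
        have h1 : p.eval (n : ℚ) = Tsum (r + 1) n t := by
          rw [hevp, ← hB (r + 1) (by omega) t n ht (by omega)]
        have h2 : q.eval (n : ℚ) = Tsum (r + 1) n t := by
          rw [hevq, Tsum_succ r n t hr]
          have hk : ∀ k ∈ Finset.Icc t n, Tsum r k t
              = ∑ m ∈ Finset.range r, B r t m * (k : ℚ) ^ m := by
            intro k hk
            rw [Finset.mem_Icc] at hk
            exact hB r hr t k ht hk.1
          rw [Finset.sum_congr rfl hk, Finset.sum_comm, hCst, ← Finset.sum_sub_distrib]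
          refine (Finset.sum_congr rfl fun m _ => ?_).symm
          rw [hinner n m, ← mul_sub, ← Finset.mul_sum]
          congr 1
          have hIccIco : Finset.Icc t n = Finset.Ico t (n + 1) := by
            rw [Finset.Ico_add_one_right_eq_Icc]
          rw [hIccIco, Finset.sum_Ico_eq_sub (fun k => (k : ℚ) ^ m) (by omega)]
        simp only [Set.mem_setOf_eq, h1, h2]
      exact ((Set.Ici_infinite t).image Nat.cast_injective.injOn).mono hsub
    have h0p : p.eval 0 = B (r + 1) t 0 := by
      rw [hevp, Finset.sum_range_succ']
      simp
    have h0q : q.eval 0 = B r t 0 - Cst := by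
      rw [hevq]
      have h01 : ∀ m : ℕ, (∑ i ∈ Finset.range (m + 1),
          bernoulli i * ((m + 1).choose i) / (m + 1) * ((0 : ℚ) + 1) ^ (m + 1 - i))
          = (0 : ℚ) ^ m := by
        intro m
        simpa using hinner 0 m
      rw [Finset.sum_congr rfl fun m _ => by rw [h01 m]]
      congr 1
      obtain ⟨s, rfl⟩ : ∃ s, r = s + 1 := ⟨r - 1, by omega⟩
      rw [Finset.sum_range_succ']
      simp
    have hCst' : Cst = B r t 0 +
        ∑ m ∈ Finset.range r, B r t m * ∑ k ∈ Finset.Ico 1 t, (k : ℚ) ^ m := by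
      rw [hCst]
      have hrt : ∀ m : ℕ, (∑ k ∈ Finset.range t, (k : ℚ) ^ m)
          = (0 : ℚ) ^ m + ∑ k ∈ Finset.Ico 1 t, (k : ℚ) ^ m := by
        intro m
        rw [Finset.range_eq_Ico, Finset.sum_eq_sum_Ico_succ_bot (by omega : 0 < t)]
        norm_num
      rw [Finset.sum_congr rfl fun m _ => by rw [hrt m]]
      simp only [mul_add, Finset.sum_add_distrib]
      congr 1
      obtain ⟨s, rfl⟩ : ∃ s, r = s + 1 := ⟨r - 1, by omega⟩
      rw [Finset.sum_range_succ']
      simp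
    have hfin := h0p.symm.trans (by rw [hpq, h0q])
    rw [hfin, hCst']
    ring
  rw [key, neg_inj]
  have hswap : (∑ j ∈ Finset.range r, ((t : ℚ) - 1) ^ (1 + j) *
        ∑ m ∈ Finset.Icc j (r - 1),
          B r t m / (m + 1) * (Nat.choose (m + 1) (m - j) : ℚ) * bernoulli' (m - j))
      = ∑ m ∈ Finset.range r, ∑ j ∈ Finset.range (m + 1),
          ((t : ℚ) - 1) ^ (1 + j) *
            (B r t m / (m + 1) * (Nat.choose (m + 1) (m - j) : ℚ) * bernoulli' (m - j)) := by
    simp_rw [Finset.mul_sum]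
    exact Finset.sum_comm' fun j m => by
      simp only [Finset.mem_range, Finset.mem_Icc]; omega
  rw [hswap]
  refine Finset.sum_congr rfl fun m _ => ?_
  have hIco : (∑ k ∈ Finset.Ico 1 t, (k : ℚ) ^ m)
      = ∑ i ∈ Finset.range (m + 1),
          bernoulli' i * ((m + 1).choose i) * ((t : ℚ) - 1) ^ (m + 1 - i) / (m + 1) := by
    have hF := sum_Ico_pow (t - 1) m
    have h1 : t - 1 + 1 = t := by omega
    have h2 : ((t - 1 : ℕ) : ℚ) = (t : ℚ) - 1 := by
      push_cast [Nat.cast_sub ht]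
      ring
    rw [h1, h2] at hF
    exact hF
  rw [hIco, Finset.mul_sum, ← Finset.sum_range_reflect]
  refine Finset.sum_congr rfl fun j hj => ?_
  simp only [Finset.mem_range, Nat.add_sub_cancel] at hj ⊢
  have hjm : j ≤ m := by omega
  have e2 : m + 1 - (m - j) = 1 + j := by omega
  rw [e2]
  ring
end

section
/- For every positive integer r and 0 ≤ m ≤ r−1, the coefficient B(r,t,m) of T(r,n,t) = ∑_{m=0}^{r−1} B(r,t,m)·n^m is a polynomial in t of degree at most r−m−1. -/
open Polynomial

lemma sum_Icc_choose_shift (r t n : ℕ) (h : t ≤ n) :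
    ∑ x ∈ Finset.Icc t n, (x - t + r).choose r = (n - t + r + 1).choose (r + 1) := by
  induction n, h using Nat.le_induction with
  | base => simp
  | succ n hn ih =>
    rw [← Finset.Ico_add_one_right_eq_Icc, Finset.sum_Ico_succ_top (by omega), Finset.Ico_add_one_right_eq_Icc, ih]
    have h1 : n + 1 - t + r = n - t + r + 1 := by omega
    rw [h1, Nat.choose_succ_succ' (n - t + r + 1), Nat.add_comm]

lemma tsum_choose (r' : ℕ) : ∀ t n : ℕ, t ≤ n →
    Tsum (r' + 1) n t = ((n - t + r').choose r' : ℚ) := by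
  induction r' with
  | zero => intro t n h; simp [Tsum]
  | succ r ih =>
    intro t n h
    show (∑ k ∈ Finset.Icc t n, Tsum (r + 1) k t) = _
    rw [Finset.sum_congr rfl (fun k hk => ih t k (Finset.mem_Icc.mp hk).1)]
    rw [← Nat.cast_sum]
    norm_cast
    rw [sum_Icc_choose_shift r t n h]
    rfl

lemma ascFact_prod (d r : ℕ) : (d + 1).ascFactorial r = ∏ i ∈ Finset.range r, (d + 1 + i) := by
  induction r with
  | zero => simp
  | succ k ih => rw [Nat.ascFactorial_succ, Finset.prod_range_succ, ih, mul_comm]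

noncomputable def Aprod (r' : ℕ) : Polynomial (Polynomial ℚ) :=
  ∏ i ∈ Finset.range r', (X + C (C ((i : ℚ) + 1) - X))

lemma Aprod_eval (r' t n : ℕ) (h : t ≤ n) :
    ((Aprod r').map (evalRingHom (t : ℚ))).eval (n : ℚ)
      = (r'.factorial : ℚ) * ((n - t + r').choose r' : ℚ) := by
  simp only [Aprod, Polynomial.map_prod, Polynomial.map_add, Polynomial.map_X,
    Polynomial.map_C, eval_prod, eval_add, eval_X, eval_C, coe_evalRingHom,
    Polynomial.eval_sub, Polynomial.eval_C, Polynomial.eval_X]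
  have : ∀ i : ℕ, (n : ℚ) + ((i : ℚ) + 1 - t) = (((n - t) + 1 + i : ℕ) : ℚ) := by
    intro i; push_cast [Nat.cast_sub h]; ring
  rw [Finset.prod_congr rfl (fun i _ => this i), ← Nat.cast_prod, ← ascFact_prod,
    Nat.ascFactorial_eq_factorial_mul_choose]
  push_cast; ring

lemma natDegree_prod_X_add_C (s : Finset ℕ) (c : ℕ → Polynomial ℚ) :
    (∏ i ∈ s, (X + C (c i))).natDegree ≤ s.card := by
  refine le_trans (Polynomial.natDegree_prod_le _ _) ?_
  have := Finset.sum_le_card_nsmul s (fun i => (X + C (c i)).natDegree) 1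
    (fun i _ => by simp [natDegree_X_add_C])
  simpa using this

lemma coeff_prod_degree (s : Finset ℕ) (c : ℕ → Polynomial ℚ)
    (hc : ∀ i, (c i).degree ≤ 1) (m : ℕ) :
    ((∏ i ∈ s, (X + C (c i))).coeff m).degree ≤ ((s.card - m : ℕ) : WithBot ℕ) := by
  classical
  induction s using Finset.induction generalizing m with
  | empty =>
    rcases m with _ | k
    · simp
    · simp [Polynomial.coeff_one]
  | @insert a s ha ih =>
    rw [Finset.prod_insert ha, add_mul, Polynomial.coeff_add,
      Finset.card_insert_of_notMem ha]
    refine le_trans (Polynomial.degree_add_le _ _) (max_le ?_ ?_)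
    · rcases m with _ | k
      · simp [Polynomial.mul_coeff_zero]
      · rw [Polynomial.coeff_X_mul]
        refine le_trans (ih k) ?_
        have e : s.card + 1 - (k + 1) = s.card - k := by omega
        rw [e]
    · rw [Polynomial.coeff_C_mul]
      by_cases hm : m ≤ s.card
      · refine le_trans (Polynomial.degree_mul_le _ _) ?_
        refine le_trans (add_le_add (hc a) (ih m)) ?_
        have : (1 : WithBot ℕ) + (s.card - m : ℕ) = ((s.card - m + 1 : ℕ) : WithBot ℕ) := by
          push_cast; ring
        rw [this]
        have e : s.card - m + 1 = s.card + 1 - m := by omega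
        rw [e]
      · have : (∏ i ∈ s, (X + C (c i))).coeff m = 0 := by
          apply Polynomial.coeff_eq_zero_of_natDegree_lt
          exact lt_of_le_of_lt (natDegree_prod_X_add_C s c) (by omega)
        simp [this]

theorem B_is_polynomial_in_t (B : ℕ → ℕ → ℕ → ℚ)
    (hB : ∀ r, 1 ≤ r → ∀ t n : ℕ, 1 ≤ t → t ≤ n →
      Tsum r n t = ∑ m ∈ Finset.range r, B r t m * (n : ℚ) ^ m)
    (r : ℕ) (hr : 1 ≤ r) (m : ℕ) (hm : m ≤ r - 1) :
    ∃ P : Polynomial ℚ, P.degree ≤ (r - m - 1 : ℕ) ∧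
      ∀ t : ℕ, 1 ≤ t → B r t m = P.eval (t : ℚ) := by
  obtain ⟨r', rfl⟩ : ∃ r', r = r' + 1 := ⟨r - 1, by omega⟩
  have hm' : m ≤ r' := by omega
  set c : ℕ → Polynomial ℚ := fun i => C ((i : ℚ) + 1) - X with hc_def
  have hAprod : Aprod r' = ∏ i ∈ Finset.range r', (X + C (c i)) := rfl
  refine ⟨C ((r'.factorial : ℚ)⁻¹) * ((Aprod r').coeff m), ?_, ?_⟩
  · -- degree bound
    refine le_trans (Polynomial.degree_mul_le _ _) ?_
    have h1 : (C ((r'.factorial : ℚ)⁻¹)).degree ≤ 0 := Polynomial.degree_C_le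
    have h2 : ((Aprod r').coeff m).degree ≤ (((Finset.range r').card - m : ℕ) : WithBot ℕ) := by
      rw [hAprod]
      exact coeff_prod_degree _ c
        (fun i => le_trans (Polynomial.degree_sub_le _ _)
          (max_le (le_trans Polynomial.degree_C_le (by norm_num))
            (le_of_eq Polynomial.degree_X))) m
    refine le_trans (add_le_add h1 h2) ?_
    rw [zero_add, Finset.card_range]
    have e : r' - m = r' + 1 - m - 1 := by omega
    rw [e]
  · -- evaluation
    intro t ht
    set H : Polynomial ℚ :=
      C ((r'.factorial : ℚ)⁻¹) * ((Aprod r').map (evalRingHom (t : ℚ))) with hH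
    set G : Polynomial ℚ :=
      ∑ m' ∈ Finset.range (r' + 1), C (B (r' + 1) t m') * X ^ m' with hG
    have hGH : G = H := by
      have hroots : {x | (G - H).IsRoot x}.Infinite := by
        apply Set.Infinite.mono (s := (fun n : ℕ => (n : ℚ)) '' Set.Ici t)
        · rintro x ⟨n, hn, rfl⟩
          have htn : t ≤ n := hn
          have hGeval : G.eval (n : ℚ) = Tsum (r' + 1) n t := by
            rw [hG]
            simp only [Polynomial.eval_finset_sum, Polynomial.eval_mul,
              Polynomial.eval_C, Polynomial.eval_pow, Polynomial.eval_X]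
            exact (hB (r' + 1) (by omega) t n ht htn).symm
          have hHeval : H.eval (n : ℚ) = Tsum (r' + 1) n t := by
            rw [hH, Polynomial.eval_mul, Polynomial.eval_C, Aprod_eval r' t n htn,
              tsum_choose r' t n htn]
            have : (r'.factorial : ℚ) ≠ 0 := by
              exact_mod_cast Nat.factorial_ne_zero r'
            field_simp
          simp [Polynomial.IsRoot, hGeval, hHeval]
        · exact Set.Infinite.image
            (Set.injOn_of_injective Nat.cast_injective) (Set.Ici_infinite t)
      have := Polynomial.eq_zero_of_infinite_isRoot _ hroots
      exact sub_eq_zero.mp this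
    have hGcoeff : G.coeff m = B (r' + 1) t m := by
      rw [hG]
      simp only [Polynomial.finset_sum_coeff, Polynomial.coeff_C_mul,
        Polynomial.coeff_X_pow]
      rw [Finset.sum_eq_single m]
      · simp
      · intro b _ hb; simp [Ne.symm hb]
      · intro hmem; exact absurd (Finset.mem_range.mpr (by omega)) hmem
    have hHcoeff : H.coeff m
        = (C ((r'.factorial : ℚ)⁻¹) * ((Aprod r').coeff m)).eval (t : ℚ) := by
      rw [hH, Polynomial.coeff_C_mul, Polynomial.coeff_map]
      simp [Polynomial.eval_mul]
    rw [← hGcoeff, hGH, hHcoeff]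
end

section
/- For positive integers n, p, r, the generalized hyperharmonic number admits the decomposition H_n^{(p,r)} = ∑_{m=0}^{r−1} ∑_{j=0}^{r−1−m} a(r,m,j)·n^j·H_n^{(p−m)}, where a(r,m,j) are the rational coefficients defined by T(r,n,t) = ∑_{m=0}^{r−1} ∑_{j=0}^{r−1−m} a(r,m,j)·n^j·t^m, and for ℓ ≥ 0, H_n^{(−ℓ)} := ∑_{x=1}^n x^ℓ. -/
/-- Generalized harmonic numbers with integer exponent:
    `Hz q n = ∑_{x=1}^n x^{-q}` (for `q ≤ 0` this is `∑_{x=1}^n x^{|q|}`). -/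
def Hz (q : ℤ) (n : ℕ) : ℚ := ∑ x ∈ Finset.Icc 1 n, (x : ℚ) ^ (-q)

/-- Generalized hyperharmonic numbers: `Hpr p 1 n = H_n^{(p)} = ∑_{j=1}^n 1/j^p`,
    `Hpr p (r+1) n = ∑_{j=1}^n Hpr p r j`. (`Hpr p 0` is an unused dummy value.) -/
def Hpr : ℕ → ℕ → ℕ → ℚ
  | _, 0, _ => 0
  | p, 1, n => ∑ j ∈ Finset.Icc 1 n, (1 : ℚ) / (j : ℚ) ^ p
  | p, r + 2, n => ∑ j ∈ Finset.Icc 1 n, Hpr p (r + 1) j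

lemma Hpr_eq_sum_Tsum (p : ℕ) : ∀ r, 1 ≤ r → ∀ n,
    Hpr p r n = ∑ t ∈ Finset.Icc 1 n, Tsum r n t / (t : ℚ) ^ p := by
  intro r
  induction r with
  | zero => omega
  | succ k ih =>
    intro _ n
    match k, ih with
    | 0, _ => simp [Hpr, Tsum, one_div]
    | k + 1, ih =>
      have h0 : Hpr p (k + 2) n = ∑ j ∈ Finset.Icc 1 n, Hpr p (k + 1) j := rfl
      rw [h0]
      have h1 : ∀ j, Hpr p (k + 1) j
          = ∑ t ∈ Finset.Icc 1 j, Tsum (k + 1) j t / (t : ℚ) ^ p := ih (by omega)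
      simp_rw [h1]
      rw [Finset.sum_comm' (t' := Finset.Icc 1 n) (s' := fun t => Finset.Icc t n)
        (by intro x y; simp only [Finset.mem_Icc]; omega)]
      refine Finset.sum_congr rfl fun t _ => ?_
      rw [show Tsum (k + 2) n t = ∑ j ∈ Finset.Icc t n, Tsum (k + 1) j t from rfl,
        Finset.sum_div]

theorem Hpr_decomposition (a : ℕ → ℕ → ℕ → ℚ)
    (ha : ∀ r, 1 ≤ r → ∀ t n : ℕ, 1 ≤ t → t ≤ n →
      Tsum r n t = ∑ m ∈ Finset.range r, ∑ j ∈ Finset.range (r - m),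
        a r m j * (n : ℚ) ^ j * (t : ℚ) ^ m)
    (n p r : ℕ) (hn : 1 ≤ n) (hp : 1 ≤ p) (hr : 1 ≤ r) :
    Hpr p r n = ∑ m ∈ Finset.range r, ∑ j ∈ Finset.range (r - m),
      a r m j * (n : ℚ) ^ j * Hz ((p : ℤ) - m) n := by
  rw [Hpr_eq_sum_Tsum p r hr n]
  have step1 : ∑ t ∈ Finset.Icc 1 n, Tsum r n t / (t : ℚ) ^ p
      = ∑ t ∈ Finset.Icc 1 n, ∑ m ∈ Finset.range r, ∑ j ∈ Finset.range (r - m),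
          a r m j * (n : ℚ) ^ j * (t : ℚ) ^ m / (t : ℚ) ^ p := by
    refine Finset.sum_congr rfl fun t ht => ?_
    rw [Finset.mem_Icc] at ht
    rw [ha r hr t n ht.1 ht.2, Finset.sum_div]
    exact Finset.sum_congr rfl fun m _ => Finset.sum_div _ _ _
  rw [step1, Finset.sum_comm]
  refine Finset.sum_congr rfl fun m _ => ?_
  rw [Finset.sum_comm]
  refine Finset.sum_congr rfl fun j _ => ?_
  rw [Hz, Finset.mul_sum]
  refine Finset.sum_congr rfl fun t ht => ?_
  rw [Finset.mem_Icc] at ht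
  have htne : (t : ℚ) ≠ 0 := (Nat.cast_pos.mpr ht.1).ne'
  rw [neg_sub, zpow_sub₀ htne, zpow_natCast, zpow_natCast]
  ring
end

section
/- For positive integers n, p, r, one has H_n^{(p,r)} = ∑_{t=1}^n (1/t^p)·T(r,n,t), where T(r,n,t) = ∑_{k_1=t}^n ∑_{k_2=t}^{k_1} ⋯ ∑_{k_{r−1}=t}^{k_{r−2}} 1. -/
lemma Hpr_aux (p r : ℕ) : ∀ n, Hpr p (r + 1) n =
    ∑ t ∈ Finset.Icc 1 n, (1 / (t : ℚ) ^ p) * Tsum (r + 1) n t := by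
  induction r with
  | zero =>
    intro n
    simp [Hpr, Tsum]
  | succ r ih =>
    intro n
    show (∑ j ∈ Finset.Icc 1 n, Hpr p (r + 1) j) = _
    have swap : (∑ j ∈ Finset.Icc 1 n, ∑ t ∈ Finset.Icc 1 j,
        (1 / (t : ℚ) ^ p) * Tsum (r + 1) j t)
        = ∑ t ∈ Finset.Icc 1 n, ∑ j ∈ Finset.Icc t n,
        (1 / (t : ℚ) ^ p) * Tsum (r + 1) j t := by
      rw [Finset.sum_sigma', Finset.sum_sigma']
      apply Finset.sum_nbij' (fun x => ⟨x.2, x.1⟩) (fun x => ⟨x.2, x.1⟩) <;>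
        simp +contextual [Finset.mem_Icc] <;> omega
    calc (∑ j ∈ Finset.Icc 1 n, Hpr p (r + 1) j)
        = ∑ j ∈ Finset.Icc 1 n, ∑ t ∈ Finset.Icc 1 j,
            (1 / (t : ℚ) ^ p) * Tsum (r + 1) j t := by
          exact Finset.sum_congr rfl fun j _ => ih j
      _ = ∑ t ∈ Finset.Icc 1 n, ∑ j ∈ Finset.Icc t n,
            (1 / (t : ℚ) ^ p) * Tsum (r + 1) j t := swap
      _ = ∑ t ∈ Finset.Icc 1 n, (1 / (t : ℚ) ^ p) * Tsum (r + 2) n t := by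
          refine Finset.sum_congr rfl fun t _ => ?_
          rw [show Tsum (r + 2) n t = ∑ k ∈ Finset.Icc t n, Tsum (r + 1) k t from rfl,
            Finset.mul_sum]

theorem Hpr_eq_sum_T (n p r : ℕ) (hn : 1 ≤ n) (hp : 1 ≤ p) (hr : 1 ≤ r) :
    Hpr p r n = ∑ t ∈ Finset.Icc 1 n, (1 / (t : ℚ) ^ p) * Tsum r n t := by
  obtain ⟨r', rfl⟩ := Nat.exists_eq_add_of_le hr
  rw [Nat.add_comm]
  exact Hpr_aux p r' n
end

section
/- For positive integers p ≥ 1 and m ≥ 3, ∑_{n=1}^∞ H_n^{(p,2)}/n^m = S^{+,+}_{p,m} + S^{+,+}_{p,m−1} − S^{+,+}_{p−1,m}, where S^{+,+}_{q,s} = ∑_{n=1}^∞ H_n^{(q)}/n^s and H_n^{(0)} = n (so S^{+,+}_{0,m} = ζ(m−1)). -/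
/-- The classical linear Euler sum `S^{+,+}_{q,s} = ∑_{n=1}^∞ H_n^{(q)}/n^s`. -/
noncomputable def S (q : ℤ) (s : ℕ) : ℝ :=
  ∑' n : ℕ, ((Hz q (n + 1) : ℚ) : ℝ) / (n + 1 : ℝ) ^ s

lemma Hz_succ (q : ℤ) (n : ℕ) :
    Hz q (n + 1) = Hz q n + ((n + 1 : ℕ) : ℚ) ^ (-q) := by
  unfold Hz
  rw [Finset.sum_Icc_succ_top (by omega)]

lemma Hz_nonneg (q : ℤ) (n : ℕ) : 0 ≤ Hz q n := by
  apply Finset.sum_nonneg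
  intro x hx
  positivity

lemma Hz_le_n (q : ℤ) (hq : 0 ≤ q) (n : ℕ) : Hz q n ≤ n := by
  calc Hz q n ≤ ∑ x ∈ Finset.Icc 1 n, (1 : ℚ) := by
        apply Finset.sum_le_sum
        intro x hx
        simp only [Finset.mem_Icc] at hx
        exact zpow_le_one_of_nonpos₀ (by exact_mod_cast hx.1) (by omega)
    _ = n := by simp

lemma Hz_le_sqrt (q : ℤ) (hq : 1 ≤ q) (n : ℕ) :
    ((Hz q n : ℚ) : ℝ) ≤ 2 * Real.sqrt n := by
  induction n with
  | zero => simp [Hz]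
  | succ n ih =>
      rw [Hz_succ]
      push_cast
      have hab : Real.sqrt n ≤ Real.sqrt (n + 1) := Real.sqrt_le_sqrt (by linarith)
      have ha2 : Real.sqrt n ^ 2 = n := Real.sq_sqrt (by positivity)
      have hb2 : Real.sqrt (n + 1) ^ 2 = ((n:ℝ) + 1) := Real.sq_sqrt (by positivity)
      have ha0 : 0 ≤ Real.sqrt n := Real.sqrt_nonneg _
      have hb0 : 0 ≤ Real.sqrt ((n:ℝ) + 1) := Real.sqrt_nonneg _
      have hb : 1 ≤ Real.sqrt ((n:ℝ) + 1) := by nlinarith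
      have hz : (((n : ℚ) + 1) ^ (-q) : ℚ) ≤ 1 / ((n : ℚ) + 1) := by
        rw [show (-q) = (-1) + (1 - q) by ring, zpow_add₀ (by positivity)]
        have h1 : ((n : ℚ) + 1) ^ (1 - q) ≤ 1 :=
          zpow_le_one_of_nonpos₀ (by linarith [Nat.cast_nonneg (α := ℚ) n]) (by omega)
        have h2 : (0:ℚ) < ((n : ℚ) + 1) ^ (-1 : ℤ) := by positivity
        calc ((n : ℚ) + 1) ^ (-1:ℤ) * ((n : ℚ) + 1) ^ (1 - q)
            ≤ ((n : ℚ) + 1) ^ (-1:ℤ) * 1 := by nlinarith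
          _ = 1 / ((n : ℚ) + 1) := by rw [mul_one, zpow_neg_one, one_div]
      have hz' : ((n : ℝ) + 1) ^ (-q) ≤ 1 / ((n : ℝ) + 1) := by
        have h := (Rat.cast_le (K := ℝ)).2 hz
        push_cast at h
        exact h
      have h5 : (Real.sqrt ((n:ℝ)+1) - Real.sqrt n) * (Real.sqrt ((n:ℝ)+1) + Real.sqrt n)
          = 1 := by nlinarith
      have key : 1 / ((n:ℝ) + 1) ≤ 2 * (Real.sqrt ((n:ℝ)+1) - Real.sqrt n) := by
        rw [div_le_iff₀ (by positivity)]
        have h7 : (Real.sqrt ((n:ℝ)+1) - Real.sqrt n) * (Real.sqrt ((n:ℝ)+1) + Real.sqrt n)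
            * Real.sqrt ((n:ℝ)+1) = Real.sqrt ((n:ℝ)+1) := by rw [h5]; ring
        nlinarith [h7, mul_nonneg (mul_self_nonneg (Real.sqrt ((n:ℝ)+1) - Real.sqrt n)) hb0]
      calc ((Hz q n : ℚ) : ℝ) + ((n : ℝ) + 1) ^ (-q)
          ≤ 2 * Real.sqrt n + 1 / ((n:ℝ) + 1) := add_le_add ih hz'
        _ ≤ 2 * Real.sqrt (n + 1) := by push_cast; linarith

lemma summable_base : Summable (fun n : ℕ => 2 / ((n : ℝ) + 1) ^ (3/2 : ℝ)) := by
  apply Summable.mul_left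
  have h : Summable (fun n : ℕ => 1 / (n : ℝ) ^ (3/2 : ℝ)) :=
    Real.summable_one_div_nat_rpow.2 (by norm_num)
  have := (summable_nat_add_iff 1).2 h
  convert this using 2 with n
  push_cast
  · rfl
  · simp

lemma summable_S_sqrt (q : ℤ) (hq : 1 ≤ q) (s : ℕ) (hs : 2 ≤ s) :
    Summable (fun n : ℕ => ((Hz q (n + 1) : ℚ) : ℝ) / (n + 1 : ℝ) ^ s) := by
  apply Summable.of_nonneg_of_le _ _ summable_base
  · intro n
    have := Hz_nonneg q (n + 1)
    positivity
  · intro n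
    have h1 : ((Hz q (n + 1) : ℚ) : ℝ) ≤ 2 * Real.sqrt (n + 1) := by
      have := Hz_le_sqrt q hq (n + 1)
      push_cast at this ⊢
      linarith
    have hpos : (0:ℝ) < (n + 1 : ℝ) := by positivity
    have hpow2 : ((n:ℝ) + 1) ^ (2:ℕ) ≤ (n + 1 : ℝ) ^ s :=
      pow_le_pow_right₀ (by linarith) hs
    have hnum : 0 ≤ 2 * Real.sqrt (n + 1) := by positivity
    calc ((Hz q (n + 1) : ℚ) : ℝ) / (n + 1 : ℝ) ^ s
        ≤ 2 * Real.sqrt (n + 1) / ((n:ℝ) + 1) ^ (2:ℕ) := by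
          apply div_le_div₀ hnum h1 (by positivity) hpow2
      _ ≤ 2 / ((n : ℝ) + 1) ^ (3/2 : ℝ) := by
          have e1 : Real.sqrt ((n:ℝ)+1) * ((n:ℝ)+1) ^ (3/2 : ℝ) = ((n:ℝ)+1) ^ (2:ℕ) := by
            rw [Real.sqrt_eq_rpow, ← Real.rpow_add hpos, ← Real.rpow_natCast ((n:ℝ)+1) 2]
            norm_num
          rw [div_le_div_iff₀ (by positivity) (by positivity)]
          nlinarith [e1]

lemma summable_S_lin (q : ℤ) (hq : 0 ≤ q) (s : ℕ) (hs : 3 ≤ s) :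
    Summable (fun n : ℕ => ((Hz q (n + 1) : ℚ) : ℝ) / (n + 1 : ℝ) ^ s) := by
  apply Summable.of_nonneg_of_le _ _ summable_base
  · intro n
    have := Hz_nonneg q (n + 1)
    positivity
  · intro n
    have h1 : ((Hz q (n + 1) : ℚ) : ℝ) ≤ (n:ℝ) + 1 := by
      have := (Rat.cast_le (K := ℝ)).2 (Hz_le_n q hq (n + 1))
      push_cast at this
      linarith
    have hpos : (0:ℝ) < (n + 1 : ℝ) := by positivity
    have hpow3 : ((n:ℝ) + 1) ^ (3:ℕ) ≤ (n + 1 : ℝ) ^ s :=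
      pow_le_pow_right₀ (by linarith) hs
    calc ((Hz q (n + 1) : ℚ) : ℝ) / (n + 1 : ℝ) ^ s
        ≤ ((n:ℝ) + 1) / ((n:ℝ) + 1) ^ (3:ℕ) := by
          apply div_le_div₀ (by linarith) h1 (by positivity) hpow3
      _ ≤ 2 / ((n : ℝ) + 1) ^ (3/2 : ℝ) := by
          have hb1 : (1:ℝ) ≤ (n:ℝ) + 1 := by linarith [Nat.cast_nonneg (α := ℝ) n]
          have e2 : ((n:ℝ)+1) ^ (3/2 : ℝ) ≤ ((n:ℝ)+1) ^ (2:ℕ) := by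
            rw [← Real.rpow_natCast ((n:ℝ)+1) 2]
            exact Real.rpow_le_rpow_of_exponent_le hb1 (by norm_num)
          rw [div_le_div_iff₀ (by positivity) (by positivity)]
          nlinarith [mul_le_mul_of_nonneg_left e2 hpos.le, pow_pos hpos 3]

lemma Hpr_one_eq (p : ℕ) (n : ℕ) : Hpr p 1 n = Hz (p : ℤ) n := by
  unfold Hpr Hz
  apply Finset.sum_congr rfl
  intro x hx
  rw [zpow_neg, zpow_natCast, one_div]

lemma Hpr_two_eq (p : ℕ) (n : ℕ) :
    Hpr p 2 n = ((n : ℚ) + 1) * Hz (p : ℤ) n - Hz ((p : ℤ) - 1) n := by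
  induction n with
  | zero => simp [Hpr, Hz]
  | succ n ih =>
      have hstep : Hpr p 2 (n + 1) = Hpr p 2 n + Hpr p 1 (n + 1) := by
        show (∑ j ∈ Finset.Icc 1 (n+1), Hpr p 1 j) = _
        rw [Finset.sum_Icc_succ_top (by omega)]
        rfl
      rw [hstep, ih, Hpr_one_eq, Hz_succ (p : ℤ), Hz_succ ((p : ℤ) - 1)]
      have hc : ((n + 1 : ℕ) : ℚ) ^ (-((p : ℤ) - 1)) =
          ((n : ℚ) + 1) * ((n + 1 : ℕ) : ℚ) ^ (-(p : ℤ)) := by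
        rw [show (-((p:ℤ) - 1)) = 1 + (-(p:ℤ)) by ring,
          zpow_add₀ (by positivity), zpow_one]
        push_cast
        ring
      rw [hc]
      push_cast
      ring

theorem euler_sum_Hpr_two (p m : ℕ) (hp : 1 ≤ p) (hm : 3 ≤ m) :
    ∑' n : ℕ, ((Hpr p 2 (n + 1) : ℚ) : ℝ) / (n + 1 : ℝ) ^ m =
      S (p : ℤ) m + S (p : ℤ) (m - 1) - S ((p : ℤ) - 1) m := by
  have hq1 : (1 : ℤ) ≤ (p : ℤ) := by exact_mod_cast hp
  have h1 := summable_S_sqrt (p : ℤ) hq1 m (by omega)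
  have h2 := summable_S_sqrt (p : ℤ) hq1 (m - 1) (by omega)
  have h3 := summable_S_lin ((p : ℤ) - 1) (by omega) m hm
  have hpt : ∀ n : ℕ, ((Hpr p 2 (n + 1) : ℚ) : ℝ) / (n + 1 : ℝ) ^ m =
      (((Hz (p : ℤ) (n + 1) : ℚ) : ℝ) / (n + 1 : ℝ) ^ m +
        ((Hz (p : ℤ) (n + 1) : ℚ) : ℝ) / (n + 1 : ℝ) ^ (m - 1)) -
      ((Hz ((p : ℤ) - 1) (n + 1) : ℚ) : ℝ) / (n + 1 : ℝ) ^ m := by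
    intro n
    have hcast : ((Hpr p 2 (n + 1) : ℚ) : ℝ) =
        ((n : ℝ) + 2) * ((Hz (p : ℤ) (n + 1) : ℚ) : ℝ) -
          ((Hz ((p : ℤ) - 1) (n + 1) : ℚ) : ℝ) := by
      have := congrArg (fun x : ℚ => (x : ℝ)) (Hpr_two_eq p (n + 1))
      push_cast at this
      convert this using 2 <;> ring
    have hpow : (n + 1 : ℝ) ^ m = (n + 1 : ℝ) ^ (m - 1) * (n + 1 : ℝ) := by
      rw [← pow_succ]
      congr 1
      omega
    have hne : (n + 1 : ℝ) ≠ 0 := by positivity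
    have hne2 : (n + 1 : ℝ) ^ (m - 1) ≠ 0 := by positivity
    rw [hcast, hpow]
    field_simp
    ring
  rw [tsum_congr hpt]
  rw [Summable.tsum_sub (h1.add h2) h3, Summable.tsum_add h1 h2]
  rfl
end
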